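/- Let (Z, E) be a reflexive graph whose relation E is antisymmetric. Then for every z ∈ Z, z_s ⊓ z_r < z_s in the concept lattice of the associated polarity, and every concept c with c < z_s satisfies c ≤ z_s ⊓ z_r; hence z_s is completely join-irreducible. -/

import Mathlib

open Set

/-- The object concept `z_s = ({z}^{↑↓}, {z}^↑)`. -/
def objectConcept {A X : Type*} (I : A → X → Prop) (a : A) : Concept A X I where
  extent := lowerPolar I (upperPolar I {a})
  intent := upperPolar I {a}
  upperPolar_extent := _root_.upperPolar_lowerPolar_upperPolar I {a}
  lowerPolar_intent := rfl

/-- The attribute concept `z_r = ({z}^↓, {z}^{↓↑})`. -/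
def attributeConcept {A X : Type*} (I : A → X → Prop) (x : X) : Concept A X I where
  extent := lowerPolar I {x}
  intent := upperPolar I (lowerPolar I {x})
  upperPolar_extent := rfl
  lowerPolar_intent := _root_.lowerPolar_upperPolar_lowerPolar I {x}

/-- For a reflexive, antisymmetric graph `(Z, E)` and any `z`, the concept `z_s ⊓ z_r` is
strictly below `z_s`, and every concept strictly below `z_s` lies below `z_s ⊓ z_r`;
hence `z_s` is completely join-irreducible (it has a greatest strictly smaller element). -/
theorem objectConcept_completely_join_irreducible {Z : Type*} (E : Z → Z → Prop)
    (hrefl : Reflexive E)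
    (hanti : ∀ z z' : Z, E z z' → E z' z → z = z') (z : Z) :
    objectConcept (fun a x => ¬ E a x) z ⊓ attributeConcept (fun a x => ¬ E a x) z <
        objectConcept (fun a x => ¬ E a x) z ∧
    (∀ c : Concept Z Z (fun a x => ¬ E a x),
      c < objectConcept (fun a x => ¬ E a x) z →
        c ≤ objectConcept (fun a x => ¬ E a x) z ⊓ attributeConcept (fun a x => ¬ E a x) z) ∧
    ∃ m : Concept Z Z (fun a x => ¬ E a x),
      IsGreatest {c : Concept Z Z (fun a x => ¬ E a x) |
        c < objectConcept (fun a x => ¬ E a x) z} m := by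
  set I : Z → Z → Prop := fun a x => ¬ E a x with hI
  -- z belongs to the extent of z_s
  have hzs : z ∈ (objectConcept I z).extent :=
    subset_lowerPolar_upperPolar I {z} (mem_singleton z)
  -- z does not belong to the extent of z_r
  have hzr : z ∉ (attributeConcept I z).extent := by
    intro h
    exact h (mem_singleton z) (hrefl z)
  -- strict inequality
  have hlt : objectConcept I z ⊓ attributeConcept I z < objectConcept I z := by
    refine lt_of_le_of_ne inf_le_left ?_
    intro h
    have : z ∈ (objectConcept I z ⊓ attributeConcept I z).extent := by rw [h]; exact hzs
    exact hzr this.2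
  -- the main bound
  have hmax : ∀ c : Concept Z Z I, c < objectConcept I z →
      c ≤ objectConcept I z ⊓ attributeConcept I z := by
    intro c hc
    refine le_inf hc.le ?_
    -- show c.fst ⊆ extentClosure I {z}
    intro a ha x hx
    rw [show x = z from hx]
    -- suppose E a z, derive contradiction
    intro haz
    have ha' : a ∈ (objectConcept I z).extent := hc.le ha
    -- E z a, else a ∈ intentClosure I {z} and then ¬ E a a
    have hza : E z a := by
      by_contra hza
      have hmem : a ∈ upperPolar I ({z} : Set Z) := by
        intro b hb
        rw [show b = z from hb]
        exact hza
      exact ha' hmem (hrefl a)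
    have haz' : a = z := hanti a z haz hza
    rw [haz'] at ha
    -- now z ∈ c.fst, so z_s ≤ c, contradicting c < z_s
    have hle : objectConcept I z ≤ c := by
      have h1 : c.intent ⊆ upperPolar I ({z} : Set Z) := by
        rw [← c.upperPolar_extent]
        exact upperPolar_anti I (singleton_subset_iff.2 ha)
      have h2 : (objectConcept I z).extent ⊆ c.extent := by
        rw [← c.lowerPolar_intent]
        exact lowerPolar_anti I h1
      exact h2
    exact absurd hle (not_le_of_gt hc)
  exact ⟨hlt, hmax, ⟨objectConcept I z ⊓ attributeConcept I z, hlt, fun c hc => hmax c hc⟩⟩
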